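/- Let A ∈ ℝ and let b, c : ℕ → ℝ be coefficient sequences with c(0) = c(1) = 0. Let x ∈ ℝ and suppose e^{x} is strictly less than the radius of convergence of the power series Σₙ b(n)·zⁿ, and e^{−x} is strictly less than the radius of convergence of the power series Σₘ c(m)·zᵐ. Define h_r(f) = Σₙ b(n)·e^{n·f} + Σ_{m≥2} c(m)·e^{−m·f} and h_t(f) = A·e^{−f} + Σₙ (b(n)/(n+1))·e^{n·f} − Σ_{m≥2} (c(m)/(m−1))·e^{−m·f}, both defined in a neighborhood of x. Then h_t is differentiable at x and h_t′(x) + h_t(x) = h_r(x). -/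

import Mathlib

open Real

private lemma rad_summable (d : ℕ → ℝ) (x : ℝ)
    (h : ENNReal.ofReal (Real.exp x) < (FormalMultilinearSeries.ofScalars ℝ d).radius) :
    ∃ s : ℝ, Real.exp x < s ∧ Summable fun n => |d n| * s ^ n := by
  obtain ⟨r, hr1, hr2⟩ := ENNReal.lt_iff_exists_nnreal_btwn.mp h
  refine ⟨r, ?_, ?_⟩
  · rwa [← ENNReal.ofReal_coe_nnreal,
      ENNReal.ofReal_lt_ofReal_iff_of_nonneg (Real.exp_pos x).le] at hr1
  · have h1 := (FormalMultilinearSeries.ofScalars ℝ d).summable_norm_mul_pow hr2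
    exact h1.congr fun n => by
      rw [FormalMultilinearSeries.ofScalars_norm, Real.norm_eq_abs]

private lemma key (a : ℕ → ℝ) (σ x s : ℝ) (hσ : σ = 1 ∨ σ = -1)
    (hs : Real.exp (σ * x) < s)
    (hsum : Summable fun n : ℕ => ((n : ℝ) + 1) * |a n| * s ^ n) :
    HasDerivAt (fun y => ∑' n : ℕ, a n * Real.exp (n * (σ * y)))
      (∑' n : ℕ, a n * ((n : ℝ) * σ) * Real.exp ((n : ℝ) * (σ * x))) x ∧
    (Summable fun n : ℕ => a n * Real.exp ((n : ℝ) * (σ * x))) ∧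
    (Summable fun n : ℕ => a n * ((n : ℝ) * σ) * Real.exp ((n : ℝ) * (σ * x))) := by
  have hspos : 0 < s := (Real.exp_pos _).trans hs
  have habs : |σ| = 1 := by rcases hσ with rfl | rfl <;> simp
  set t : Set ℝ := {y | σ * y < Real.log s} with ht
  have hxt : x ∈ t := (Real.lt_log_iff_exp_lt hspos).mpr hs
  have hopen : IsOpen t := isOpen_lt (continuous_const.mul continuous_id) continuous_const
  have hconn : IsPreconnected t := by
    have : Convex ℝ t := convex_halfSpace_lt (IsLinearMap.isLinearMap_smul σ) _
    exact this.isPreconnected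
  have hE : ∀ (n : ℕ) (y : ℝ), y ∈ t → Real.exp ((n : ℝ) * (σ * y)) ≤ s ^ n := by
    intro n y hy
    rw [Real.exp_nat_mul]
    exact pow_le_pow_left₀ (Real.exp_pos _).le ((Real.lt_log_iff_exp_lt hspos).mp hy).le n
  have hg : ∀ (n : ℕ) (y : ℝ), y ∈ t →
      HasDerivAt (fun z => a n * Real.exp (n * (σ * z)))
        (a n * ((n : ℝ) * σ) * Real.exp ((n : ℝ) * (σ * y))) y := by
    intro n y _
    have h1 : HasDerivAt (fun z : ℝ => (n : ℝ) * (σ * z)) ((n : ℝ) * σ) y := by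
      simpa using ((hasDerivAt_id y).const_mul σ).const_mul (n : ℝ)
    have := h1.exp.const_mul (a n)
    rw [show a n * ((n : ℝ) * σ) * Real.exp ((n : ℝ) * (σ * y))
      = a n * (Real.exp ((n : ℝ) * (σ * y)) * ((n : ℝ) * σ)) by ring]
    exact this
  have hg' : ∀ (n : ℕ) (y : ℝ), y ∈ t →
      ‖a n * ((n : ℝ) * σ) * Real.exp ((n : ℝ) * (σ * y))‖ ≤ ((n : ℝ) + 1) * |a n| * s ^ n := by
    intro n y hy
    rw [Real.norm_eq_abs, abs_mul, abs_mul, abs_mul, Nat.abs_cast, habs, mul_one,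
      abs_of_pos (Real.exp_pos _)]
    have h1 := hE n y hy
    have h2 : (0:ℝ) ≤ |a n| := abs_nonneg _
    have h3 : (0:ℝ) ≤ (n : ℝ) := Nat.cast_nonneg n
    have h4 : (0:ℝ) < Real.exp ((n : ℝ) * (σ * y)) := Real.exp_pos _
    nlinarith [mul_le_mul_of_nonneg_left h1 (mul_nonneg h2 h3), pow_nonneg hspos.le n]
  have hg0 : Summable fun n : ℕ => a n * Real.exp ((n : ℝ) * (σ * x)) := by
    apply Summable.of_norm_bounded hsum
    intro n
    rw [Real.norm_eq_abs, abs_mul, abs_of_pos (Real.exp_pos _)]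
    have h1 := hE n x hxt
    have h2 : (0:ℝ) ≤ |a n| := abs_nonneg _
    have h4 : (0:ℝ) < Real.exp ((n : ℝ) * (σ * x)) := Real.exp_pos _
    nlinarith [mul_le_mul_of_nonneg_left h1 h2,
      mul_nonneg (mul_nonneg (Nat.cast_nonneg (α := ℝ) n) h2) (pow_nonneg hspos.le n)]
  refine ⟨hasDerivAt_tsum_of_isPreconnected hsum hopen hconn hg hg' hxt hg0 hxt, hg0, ?_⟩
  exact Summable.of_norm_bounded hsum fun n => hg' n x hxt

private lemma aux2 (d E C : ℝ) (h : d - 1 ≠ 0) :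
    C / (d - 1) * (d * -1) * E + C / (d - 1) * E = -(C * E) := by
  field_simp
  ring

/-- Solution of the linear first-order inhomogeneous ODE `ḣ_t + h_t = h_r`
(equation (edohomo)) under the ansatz
`h_r(f) = Σₙ Bₙ e^{nf} + Σ_{m≥2} Cₘ e^{−mf}`: the function
`h_t(f) = A·e^{−f} + Σₙ Bₙ e^{nf}/(n+1) − Σ_{m≥2} Cₘ e^{−mf}/(m−1)` is
differentiable and satisfies the ODE. Since `c 0 = c 1 = 0`, the sums over
all `m : ℕ` coincide with the sums over `m ≥ 2`. -/
theorem stmt_10 (A : ℝ) (b c : ℕ → ℝ) (hc0 : c 0 = 0) (hc1 : c 1 = 0) (x : ℝ)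
    (hb : ENNReal.ofReal (Real.exp x) < (FormalMultilinearSeries.ofScalars ℝ b).radius)
    (hc : ENNReal.ofReal (Real.exp (-x)) < (FormalMultilinearSeries.ofScalars ℝ c).radius)
    (h_r h_t : ℝ → ℝ)
    (hhr : ∀ f : ℝ, h_r f =
      (∑' n : ℕ, b n * Real.exp (n * f)) + ∑' m : ℕ, c m * Real.exp (-(m * f)))
    (hht : ∀ f : ℝ, h_t f = A * Real.exp (-f)
      + (∑' n : ℕ, b n / (n + 1) * Real.exp (n * f))
      - ∑' m : ℕ, c m / (m - 1) * Real.exp (-(m * f))) :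
    DifferentiableAt ℝ h_t x ∧ deriv h_t x + h_t x = h_r x := by
  obtain ⟨s₁, hs₁, hsum₁⟩ := rad_summable b x hb
  obtain ⟨s₂, hs₂, hsum₂⟩ := rad_summable c (-x) hc
  have hsumb : Summable fun n : ℕ => ((n : ℝ) + 1) * |b n / ((n : ℝ) + 1)| * s₁ ^ n := by
    apply hsum₁.congr
    intro n
    have hne : ((n : ℝ) + 1) ≠ 0 := by positivity
    rw [abs_div, abs_of_pos (by positivity : (0:ℝ) < (n : ℝ) + 1),
      mul_comm ((n : ℝ) + 1) (|b n| / ((n : ℝ) + 1)), div_mul_cancel₀ _ hne]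
  have hsumc : Summable fun n : ℕ => ((n : ℝ) + 1) * |c n / ((n : ℝ) - 1)| * s₂ ^ n := by
    have hs₂pos : 0 < s₂ := (Real.exp_pos _).trans hs₂
    refine Summable.of_nonneg_of_le (fun n => by positivity)
      (f := fun n => 3 * (|c n| * s₂ ^ n)) ?_ (hsum₂.mul_left 3)
    intro n
    match n with
    | 0 => simp [hc0]
    | 1 => simp [hc1]
    | (m + 2) =>
      have h1 : |c (m + 2) / ((((m + 2 : ℕ) : ℝ)) - 1)| = |c (m + 2)| / ((m : ℝ) + 1) := by
        rw [abs_div]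
        congr 1
        rw [abs_of_pos (by push_cast; linarith [Nat.cast_nonneg (α := ℝ) m])]
        push_cast; ring
      rw [h1]
      have h2 : (0:ℝ) ≤ s₂ ^ (m + 2) := by positivity
      have h3 : (0:ℝ) ≤ |c (m + 2)| := abs_nonneg _
      have h4 : (0:ℝ) < (m : ℝ) + 1 := by positivity
      rw [div_eq_mul_inv]
      push_cast
      have h6 : ((m : ℝ) + 2 + 1) * ((m : ℝ) + 1)⁻¹ ≤ 3 := by
        rw [← div_eq_mul_inv, div_le_iff₀ h4]; linarith
      nlinarith [mul_le_mul_of_nonneg_right h6 (mul_nonneg h3 h2)]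
  obtain ⟨hd₁, hS₁, hD₁⟩ := key (fun n => b n / ((n : ℝ) + 1)) 1 x s₁ (Or.inl rfl)
    (by simpa using hs₁) hsumb
  obtain ⟨hd₂, hS₂, hD₂⟩ := key (fun n => c n / ((n : ℝ) - 1)) (-1) x s₂ (Or.inr rfl)
    (by simpa using hs₂) hsumc
  have hA : HasDerivAt (fun y : ℝ => A * Real.exp (-y)) (A * (Real.exp (-x) * -1)) x :=
    ((hasDerivAt_neg x).exp).const_mul A
  have hfun : h_t = (fun y => A * Real.exp (-y)
      + (∑' n : ℕ, b n / ((n : ℝ) + 1) * Real.exp ((n : ℝ) * (1 * y)))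
      - ∑' m : ℕ, c m / ((m : ℝ) - 1) * Real.exp ((m : ℝ) * (-1 * y))) := by
    funext y
    simp only [one_mul, neg_one_mul, mul_neg]
    exact hht y
  have H : HasDerivAt h_t
      (A * (Real.exp (-x) * -1)
        + (∑' n : ℕ, b n / ((n : ℝ) + 1) * ((n : ℝ) * 1) * Real.exp ((n : ℝ) * (1 * x)))
        - ∑' n : ℕ, c n / ((n : ℝ) - 1) * ((n : ℝ) * -1) * Real.exp ((n : ℝ) * (-1 * x))) x := by
    rw [hfun]
    exact (hA.add hd₁).sub hd₂
  refine ⟨H.differentiableAt, ?_⟩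
  rw [H.deriv, hht x, hhr x]
  have hS₁' : Summable fun n : ℕ => b n / ((n : ℝ) + 1) * Real.exp ((n : ℝ) * x) := by
    simpa using hS₁
  have hS₂' : Summable fun n : ℕ => c n / ((n : ℝ) - 1) * Real.exp (-((n : ℝ) * x)) := by
    simpa [mul_neg] using hS₂
  have e1 : (∑' n : ℕ, b n / ((n : ℝ) + 1) * ((n : ℝ) * 1) * Real.exp ((n : ℝ) * (1 * x)))
      + (∑' n : ℕ, b n / ((n : ℝ) + 1) * Real.exp ((n : ℝ) * x))
      = ∑' n : ℕ, b n * Real.exp ((n : ℝ) * x) := by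
    rw [← Summable.tsum_add hD₁ hS₁']
    apply tsum_congr
    intro n
    have hne : ((n : ℝ) + 1) ≠ 0 := by positivity
    simp only [one_mul, mul_one]
    field_simp
  have e2 : (∑' n : ℕ, c n / ((n : ℝ) - 1) * ((n : ℝ) * -1) * Real.exp ((n : ℝ) * (-1 * x)))
      + (∑' n : ℕ, c n / ((n : ℝ) - 1) * Real.exp (-((n : ℝ) * x)))
      = -∑' n : ℕ, c n * Real.exp (-((n : ℝ) * x)) := by
    rw [← Summable.tsum_add hD₂ hS₂', ← tsum_neg]
    apply tsum_congr
    intro n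
    match n with
    | 0 => simp [hc0]
    | 1 => simp [hc1]
    | (m + 2) =>
      have hne : (((m + 2 : ℕ) : ℝ)) - 1 ≠ 0 :=
        ne_of_gt (by push_cast; linarith [Nat.cast_nonneg (α := ℝ) m])
      have harg : (((m + 2 : ℕ) : ℝ)) * (-1 * x) = -((((m + 2 : ℕ) : ℝ)) * x) := by ring
      rw [harg]
      exact aux2 _ _ _ hne
  linarith [e1, e2]
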